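/- Let G = (V,E) be the directed spanner instance built from a projection games instance in which every vertex of L has degree exactly K ≥ 1, with parameter k ≥ 2, and let y' be built from a feasible solution y* to SDP_Proj^{r+2} (r ≥ 0). Then ∑_{e∈E} y'_{{e}} = (m+n)(2|Σ|−2) + m·K·|Σ|·(2k−3) + (m+n)·k·K·|Σ|, and this quantity is at most 5·|V|; in particular the objective value of y' is O(|V|). -/

import Mathlib

open Finset

/-- A set of (vertex, label) pairs is *inconsistent* if it assigns two different labels to the
same vertex. -/
def Inconsistent {W Sg : Type*} (Ψ : Finset (W × Sg)) : Prop :=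
  ∃ v σ σ', σ ≠ σ' ∧ (v, σ) ∈ Ψ ∧ (v, σ') ∈ Ψ

/-- Feasibility for the level-`r` Lasserre SDP for projection games (`SDP_Proj^r`) on the
vertex set `W` (`= L ⊕ R`) with alphabet `Sg`: `y ∅ = 1`, the moment matrix
`(y_{Ψ₁ ∪ Ψ₂})_{|Ψ₁|,|Ψ₂| ≤ r}` is positive semidefinite, and for every vertex `v` and all
`Ψ₁, Ψ₂` with `|Ψ₁|, |Ψ₂| ≤ r` one has `∑_{σ} y_{Ψ₁∪Ψ₂∪{(v,σ)}} = y_{Ψ₁∪Ψ₂}`. -/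
def ProjFeasible {W Sg : Type*} [Fintype W] [Fintype Sg] [DecidableEq W] [DecidableEq Sg]
    (r : ℕ) (y : Finset (W × Sg) → ℝ) : Prop :=
  y ∅ = 1 ∧
  (Matrix.of fun Ψ₁ Ψ₂ : {S : Finset (W × Sg) // S.card ≤ r} => y (Ψ₁.1 ∪ Ψ₂.1)).PosSemidef ∧
  ∀ (v : W) (Ψ₁ Ψ₂ : Finset (W × Sg)), Ψ₁.card ≤ r → Ψ₂.card ≤ r →
    ∑ σ : Sg, y ((Ψ₁ ∪ Ψ₂) ∪ {(v, σ)}) = y (Ψ₁ ∪ Ψ₂)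

/-- The ambient vertex type for the directed `(2k−1)`-spanner instance built from a projection
games instance with left vertices `L`, right vertices `R` and alphabet `Sg`; `D` is the number
of duplicate vertices (`D = k·K·|Σ|`) and `T` the number of internal vertices of each middle
path (`T = 2k−4`).  The five summands are: the label vertices `c_{i,σ}`, the duplicate vertices
`c_i^l`, the label vertices `x_{j,σ}`, the duplicate vertices `x_j^l`, and the middle-path
vertices `w_{i,j,σL,σR,t}`. -/
abbrev SpV (L R Sg : Type) (D T : ℕ) : Type :=
  (L × Sg) ⊕ (L × Fin D) ⊕ (R × Sg) ⊕ (R × Fin D) ⊕ (L × R × Sg × Sg × Fin T)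

namespace SpV

variable {L R Sg : Type} {D T : ℕ}

/-- The label vertex `c_{i,σ}`. -/
def cLab (i : L) (σ : Sg) : SpV L R Sg D T := Sum.inl (i, σ)

/-- The duplicate vertex `c_i^l`. -/
def cDup (i : L) (l : Fin D) : SpV L R Sg D T := Sum.inr (Sum.inl (i, l))

/-- The label vertex `x_{j,σ}`. -/
def xLab (j : R) (σ : Sg) : SpV L R Sg D T := Sum.inr (Sum.inr (Sum.inl (j, σ)))

/-- The duplicate vertex `x_j^l`. -/
def xDup (j : R) (l : Fin D) : SpV L R Sg D T :=
  Sum.inr (Sum.inr (Sum.inr (Sum.inl (j, l))))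

/-- The middle-path vertex `w_{i,j,σL,σR,t}`. -/
def mid (i : L) (j : R) (σL σR : Sg) (t : Fin T) : SpV L R Sg D T :=
  Sum.inr (Sum.inr (Sum.inr (Sum.inr (i, j, σL, σR, t))))

end SpV

set_option synthInstance.maxSize 1024 in
instance SpV.instDecidableEq {L R Sg : Type} [DecidableEq L] [DecidableEq R] [DecidableEq Sg]
    {D T : ℕ} : DecidableEq (SpV L R Sg D T) := inferInstance

instance SpV.instFintype {L R Sg : Type} [Fintype L] [Fintype R] [Fintype Sg] {D T : ℕ} :
    Fintype (SpV L R Sg D T) := inferInstance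

namespace Spanner

/-- The number `k·K·|Σ|` of duplicate vertices per projection-games vertex. -/
abbrev numDup (Sg : Type) [Fintype Sg] (k K : ℕ) : ℕ := k * K * Fintype.card Sg

/-- The vertex type of the directed spanner instance with parameters `k, K`. -/
abbrev Vt (L R Sg : Type) [Fintype Sg] (k K : ℕ) : Type :=
  SpV L R Sg (numDup Sg k K) (2 * k - 4)

/-- The edge set `E_L = {(c_i^l, c_{i,σ})}`. -/
def ELedges (L R Sg : Type) [Fintype L] [Fintype R] [Fintype Sg]
    [DecidableEq L] [DecidableEq R] [DecidableEq Sg] (k K : ℕ) :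
    Finset (Vt L R Sg k K × Vt L R Sg k K) :=
  Finset.univ.image fun p : L × Fin (numDup Sg k K) × Sg =>
    (SpV.cDup p.1 p.2.1, SpV.cLab p.1 p.2.2)

/-- The edge set `E_R = {(x_{j,σ}, x_j^l)}`. -/
def ERedges (L R Sg : Type) [Fintype L] [Fintype R] [Fintype Sg]
    [DecidableEq L] [DecidableEq R] [DecidableEq Sg] (k K : ℕ) :
    Finset (Vt L R Sg k K × Vt L R Sg k K) :=
  Finset.univ.image fun p : R × Fin (numDup Sg k K) × Sg =>
    (SpV.xLab p.1 p.2.2, SpV.xDup p.1 p.2.1)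

/-- The edge set `E_LStars = {(c_{i,1}, c_{i,σ}), (c_{i,σ}, c_{i,1}) : σ ≠ 1}`
(`σ0` plays the role of the fixed label `1 ∈ Σ`). -/
def ELStars (L R : Type) {Sg : Type} [Fintype L] [Fintype R] [Fintype Sg]
    [DecidableEq L] [DecidableEq R] [DecidableEq Sg] (σ0 : Sg) (k K : ℕ) :
    Finset (Vt L R Sg k K × Vt L R Sg k K) :=
  ((Finset.univ.filter fun p : L × Sg => p.2 ≠ σ0).image fun p =>
      (SpV.cLab p.1 σ0, SpV.cLab p.1 p.2)) ∪
  ((Finset.univ.filter fun p : L × Sg => p.2 ≠ σ0).image fun p =>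
      (SpV.cLab p.1 p.2, SpV.cLab p.1 σ0))

/-- The edge set `E_RStars = {(x_{j,1}, x_{j,σ}), (x_{j,σ}, x_{j,1}) : σ ≠ 1}`. -/
def ERStars (L R : Type) {Sg : Type} [Fintype L] [Fintype R] [Fintype Sg]
    [DecidableEq L] [DecidableEq R] [DecidableEq Sg] (σ0 : Sg) (k K : ℕ) :
    Finset (Vt L R Sg k K × Vt L R Sg k K) :=
  ((Finset.univ.filter fun p : R × Sg => p.2 ≠ σ0).image fun p =>
      (SpV.xLab p.1 σ0, SpV.xLab p.1 p.2)) ∪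
  ((Finset.univ.filter fun p : R × Sg => p.2 ≠ σ0).image fun p =>
      (SpV.xLab p.1 p.2, SpV.xLab p.1 σ0))

/-- The edge set `E_Outer = {(c_i^l, x_j^l) : {c_i, x_j} ∈ E_Proj, l ∈ [kK|Σ|]}`. -/
def EOuter {L R : Type} (Sg : Type) [Fintype L] [Fintype R] [Fintype Sg]
    [DecidableEq L] [DecidableEq R] [DecidableEq Sg]
    (Eproj : Finset (L × R)) (k K : ℕ) :
    Finset (Vt L R Sg k K × Vt L R Sg k K) :=
  (Eproj ×ˢ (Finset.univ : Finset (Fin (numDup Sg k K)))).image fun p =>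
    (SpV.cDup p.1.1 p.2, SpV.xDup p.1.2 p.2)

/-- The vertex sequence `c_{i,σL}, w_{i,j,σL,σR,1}, …, w_{i,j,σL,σR,2k−4}, x_{j,σR}` of the
middle path (for `k = 2` it is just `c_{i,σL}, x_{j,σR}`). -/
def midVerts {L R Sg : Type} [Fintype Sg] (k K : ℕ) (i : L) (j : R) (σL σR : Sg) :
    List (Vt L R Sg k K) :=
  (SpV.cLab i σL :: (List.finRange (2 * k - 4)).map fun t => SpV.mid i j σL σR t) ++
    [SpV.xLab j σR]

/-- The list of consecutive edges of a vertex sequence. -/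
def pathEdges {V : Type*} (vs : List V) : List (V × V) := vs.zip vs.tail

/-- The edge list `E_M^{i,j,σL,σR}` of the middle path from `c_{i,σL}` to `x_{j,σR}`. -/
def EMpath {L R Sg : Type} [Fintype Sg] (k K : ℕ) (i : L) (j : R) (σL σR : Sg) :
    List (Vt L R Sg k K × Vt L R Sg k K) :=
  pathEdges (midVerts k K i j σL σR)

/-- The edge set `E_M = ⋃_{ {c_i,x_j} ∈ E_Proj, (σL,σR) ∈ π_{i,j} } E_M^{i,j,σL,σR}`. -/
def EMedges {L R Sg : Type} [Fintype L] [Fintype R] [Fintype Sg]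
    [DecidableEq L] [DecidableEq R] [DecidableEq Sg]
    (Eproj : Finset (L × R)) (π : L → R → Sg → Sg) (k K : ℕ) :
    Finset (Vt L R Sg k K × Vt L R Sg k K) :=
  Eproj.biUnion fun e => (Finset.univ : Finset Sg).biUnion fun σL =>
    (EMpath k K e.1 e.2 σL (π e.1 e.2 σL)).toFinset

/-- The edge set `E = E_L ∪ E_LStars ∪ E_M ∪ E_RStars ∪ E_R ∪ E_Outer` of the directed
spanner instance. -/
def Edges {L R Sg : Type} [Fintype L] [Fintype R] [Fintype Sg]
    [DecidableEq L] [DecidableEq R] [DecidableEq Sg]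
    (Eproj : Finset (L × R)) (π : L → R → Sg → Sg) (σ0 : Sg) (k K : ℕ) :
    Finset (Vt L R Sg k K × Vt L R Sg k K) :=
  ELedges L R Sg k K ∪ ELStars L R σ0 k K ∪ EMedges Eproj π k K ∪
    ERStars L R σ0 k K ∪ ERedges L R Sg k K ∪ EOuter Sg Eproj k K

/-- The vertex set `V = L_Labels ∪ L_Dups ∪ R_Labels ∪ R_Dups ∪ M_Paths` of the directed
spanner instance. -/
def Verts {L R Sg : Type} [Fintype L] [Fintype R] [Fintype Sg]
    [DecidableEq L] [DecidableEq R] [DecidableEq Sg]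
    (Eproj : Finset (L × R)) (π : L → R → Sg → Sg) (k K : ℕ) :
    Finset (Vt L R Sg k K) :=
  (Finset.univ.image fun p : L × Sg => SpV.cLab p.1 p.2) ∪
  (Finset.univ.image fun p : L × Fin (numDup Sg k K) => SpV.cDup p.1 p.2) ∪
  (Finset.univ.image fun p : R × Sg => SpV.xLab p.1 p.2) ∪
  (Finset.univ.image fun p : R × Fin (numDup Sg k K) => SpV.xDup p.1 p.2) ∪
  (Eproj.biUnion fun e => (Finset.univ : Finset Sg).biUnion fun σL =>
    Finset.univ.image fun t : Fin (2 * k - 4) =>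
      SpV.mid e.1 e.2 σL (π e.1 e.2 σL) t)

/-- The map `Φ` sending an edge of `E ∖ E_Outer` to the corresponding label set:
`Φ((c_i^l, c_{i,σ})) = {(c_i, σ)}`, `Φ((x_{j,σ}, x_j^l)) = {(x_j, σ)}`, and `Φ(e) = ∅` for
`e ∈ E_LStars ∪ E_M ∪ E_RStars`. -/
def Phi {L R Sg : Type} [Fintype Sg] {k K : ℕ}
    (e : Vt L R Sg k K × Vt L R Sg k K) : Finset ((L ⊕ R) × Sg) :=
  match e with
  | (Sum.inr (Sum.inl _), Sum.inl (i, σ)) => {(Sum.inl i, σ)}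
  | (Sum.inr (Sum.inr (Sum.inl (j, σ))), Sum.inr (Sum.inr (Sum.inr (Sum.inl _)))) =>
      {(Sum.inr j, σ)}
  | _ => ∅

/-- The fractional solution `y'` built from a solution `y*` of the projection games SDP:
`y'_S = 0` if `S` contains an edge of `E_Outer`, and `y'_S = y*_{Φ(S)}` otherwise
(where `Φ(S) = ⋃_{e ∈ S} Φ(e)`). -/
def yPrime {L R Sg : Type} [Fintype L] [Fintype R] [Fintype Sg]
    [DecidableEq L] [DecidableEq R] [DecidableEq Sg]
    (Eproj : Finset (L × R)) (k K : ℕ) (ystar : Finset ((L ⊕ R) × Sg) → ℝ)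
    (S : Finset (Vt L R Sg k K × Vt L R Sg k K)) : ℝ :=
  if (S ∩ EOuter Sg Eproj k K).Nonempty then 0 else ystar (S.biUnion Phi)

end Spanner

set_option linter.unusedSectionVars false
namespace Spanner
variable {L R Sg : Type} [Fintype L] [Fintype R] [Fintype Sg]
  [DecidableEq L] [DecidableEq R] [DecidableEq Sg]

/-- constructor tag of a spanner vertex -/
def tag {D T : ℕ} : SpV L R Sg D T → ℕ
  | Sum.inl _ => 0
  | Sum.inr (Sum.inl _) => 1
  | Sum.inr (Sum.inr (Sum.inl _)) => 2
  | Sum.inr (Sum.inr (Sum.inr (Sum.inl _))) => 3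
  | Sum.inr (Sum.inr (Sum.inr (Sum.inr _))) => 4

@[simp] lemma tag_cLab {D T : ℕ} (i : L) (σ : Sg) : tag (SpV.cLab i σ : SpV L R Sg D T) = 0 := rfl
@[simp] lemma tag_cDup {D T : ℕ} (i : L) (l : Fin D) : tag (SpV.cDup i l : SpV L R Sg D T) = 1 := rfl
@[simp] lemma tag_xLab {D T : ℕ} (j : R) (σ : Sg) : tag (SpV.xLab j σ : SpV L R Sg D T) = 2 := rfl
@[simp] lemma tag_xDup {D T : ℕ} (j : R) (l : Fin D) : tag (SpV.xDup j l : SpV L R Sg D T) = 3 := rfl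
@[simp] lemma tag_mid {D T : ℕ} (i : L) (j : R) (σL σR : Sg) (t : Fin T) :
    tag (SpV.mid i j σL σR t : SpV L R Sg D T) = 4 := rfl

lemma pathEdges_cons_cons {V : Type*} (a b : V) (l : List V) :
    pathEdges (a :: b :: l) = (a, b) :: pathEdges (b :: l) := rfl

lemma length_pathEdges {V : Type*} (l : List V) : (pathEdges l).length = l.length - 1 := by
  simp [pathEdges, List.length_zip, List.length_tail]

lemma nodup_pathEdges {V : Type*} {l : List V} (h : l.tail.Nodup) : (pathEdges l).Nodup := by
  have hlen : l.tail.length ≤ l.length := by simp [List.length_tail]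
  have hmap : (pathEdges l).map Prod.snd = l.tail := List.map_snd_zip hlen
  exact List.Nodup.of_map Prod.snd (hmap ▸ h)

lemma mem_pathEdges_structure {V : Type*} :
    ∀ (ms : List V) (c x u v : V), (u, v) ∈ pathEdges (c :: ms ++ [x]) →
      (u = c ∨ u ∈ ms) ∧ (v ∈ ms ∨ v = x)
  | [], c, x, u, v, h => by
      have h' : (u, v) ∈ [(c, x)] := h
      simp only [List.mem_singleton, Prod.mk.injEq] at h'
      simp [h'.1, h'.2]
  | m :: ms, c, x, u, v, h => by
      simp only [List.cons_append, pathEdges_cons_cons] at h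
      rcases List.mem_cons.1 h with h | h
      · obtain ⟨h1, h2⟩ := Prod.mk.injEq .. ▸ h
        simp_all
      · have := mem_pathEdges_structure ms m x u v (by simpa using h)
        simp only [List.mem_cons]
        tauto

lemma mem_EMpath_structure {k K : ℕ} {i : L} {j : R} {σL σR : Sg}
    {u v : Vt L R Sg k K} (h : (u, v) ∈ EMpath k K i j σL σR) :
    (u = SpV.cLab i σL ∨ ∃ t, u = SpV.mid i j σL σR t) ∧
    ((∃ t, v = SpV.mid i j σL σR t) ∨ v = SpV.xLab j σR) := by
  have := mem_pathEdges_structure ((List.finRange (2 * k - 4)).map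
    fun t => (SpV.mid i j σL σR t : Vt L R Sg k K)) (SpV.cLab i σL) (SpV.xLab j σR) u v h
  simpa [List.mem_map, eq_comm] using this

variable {Eproj : Finset (L × R)} {π : L → R → Sg → Sg} {σ0 : Sg} {k K : ℕ}

lemma tags_ELedges {e : Vt L R Sg k K × Vt L R Sg k K} (h : e ∈ ELedges L R Sg k K) :
    tag e.1 = 1 ∧ tag e.2 = 0 := by
  simp only [ELedges, Finset.mem_image] at h
  obtain ⟨p, -, rfl⟩ := h; simp

lemma tags_ERedges {e : Vt L R Sg k K × Vt L R Sg k K} (h : e ∈ ERedges L R Sg k K) :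
    tag e.1 = 2 ∧ tag e.2 = 3 := by
  simp only [ERedges, Finset.mem_image] at h
  obtain ⟨p, -, rfl⟩ := h; simp

lemma tags_ELStars {e : Vt L R Sg k K × Vt L R Sg k K} (h : e ∈ ELStars L R σ0 k K) :
    tag e.1 = 0 ∧ tag e.2 = 0 := by
  simp only [ELStars, Finset.mem_union, Finset.mem_image] at h
  rcases h with ⟨p, -, rfl⟩ | ⟨p, -, rfl⟩ <;> simp

lemma tags_ERStars {e : Vt L R Sg k K × Vt L R Sg k K} (h : e ∈ ERStars L R σ0 k K) :
    tag e.1 = 2 ∧ tag e.2 = 2 := by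
  simp only [ERStars, Finset.mem_union, Finset.mem_image] at h
  rcases h with ⟨p, -, rfl⟩ | ⟨p, -, rfl⟩ <;> simp

lemma tags_EOuter {e : Vt L R Sg k K × Vt L R Sg k K} (h : e ∈ EOuter Sg Eproj k K) :
    tag e.1 = 1 ∧ tag e.2 = 3 := by
  simp only [EOuter, Finset.mem_image] at h
  obtain ⟨p, -, rfl⟩ := h; simp

lemma mem_EMedges {e : Vt L R Sg k K × Vt L R Sg k K} :
    e ∈ EMedges Eproj π k K ↔ ∃ p ∈ Eproj, ∃ σL : Sg,
      e ∈ EMpath k K p.1 p.2 σL (π p.1 p.2 σL) := by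
  simp [EMedges, List.mem_toFinset]

lemma tags_EMedges {e : Vt L R Sg k K × Vt L R Sg k K} (h : e ∈ EMedges Eproj π k K) :
    (tag e.1 = 0 ∨ tag e.1 = 4) ∧ (tag e.2 = 4 ∨ tag e.2 = 2) := by
  obtain ⟨p, -, σL, hp⟩ := mem_EMedges.1 h
  obtain ⟨h1, h2⟩ := mem_EMpath_structure (u := e.1) (v := e.2) (by simpa using hp)
  constructor
  · rcases h1 with ht | ⟨t, ht⟩ <;> simp [ht]
  · rcases h2 with ⟨t, ht⟩ | ht <;> simp [ht]

lemma yPrime_singleton (ystar : Finset ((L ⊕ R) × Sg) → ℝ)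
    (e : Vt L R Sg k K × Vt L R Sg k K) :
    yPrime Eproj k K ystar {e} =
      if e ∈ EOuter Sg Eproj k K then 0 else ystar (Phi e) := by
  by_cases h : e ∈ EOuter Sg Eproj k K
  · simp [yPrime, h, Finset.singleton_inter_of_mem]
  · simp [yPrime, Finset.singleton_inter_of_notMem h, Finset.singleton_biUnion, h]
lemma sum_ELedges' (ystar : Finset ((L ⊕ R) × Sg) → ℝ)
    (hsum : ∀ v : L ⊕ R, ∑ σ : Sg, ystar {(v, σ)} = 1) :
    ∑ e ∈ ELedges L R Sg k K, yPrime Eproj k K ystar {e}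
      = (Fintype.card L * numDup Sg k K : ℕ) := by
  rw [ELedges, Finset.sum_image (by
    intro p _ q _ h
    obtain ⟨p1, p2, p3⟩ := p; obtain ⟨q1, q2, q3⟩ := q
    simp_all [SpV.cDup, SpV.cLab])]
  have hval : ∀ p : L × Fin (numDup Sg k K) × Sg,
      yPrime Eproj k K ystar {(SpV.cDup p.1 p.2.1, SpV.cLab p.1 p.2.2)}
        = ystar {(Sum.inl p.1, p.2.2)} := by
    intro p
    rw [yPrime_singleton, if_neg (fun h => by simpa using (tags_EOuter h).2)]
    rfl
  rw [Finset.sum_congr rfl fun p _ => hval p]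
  rw [Fintype.sum_prod_type]
  simp only [Fintype.sum_prod_type]
  simp [hsum, Finset.card_univ, mul_comm]

lemma sum_ERedges' (ystar : Finset ((L ⊕ R) × Sg) → ℝ)
    (hsum : ∀ v : L ⊕ R, ∑ σ : Sg, ystar {(v, σ)} = 1) :
    ∑ e ∈ ERedges L R Sg k K, yPrime Eproj k K ystar {e}
      = (Fintype.card R * numDup Sg k K : ℕ) := by
  rw [ERedges, Finset.sum_image (by
    intro p _ q _ h
    obtain ⟨p1, p2, p3⟩ := p; obtain ⟨q1, q2, q3⟩ := q
    simp_all [SpV.xDup, SpV.xLab])]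
  have hval : ∀ p : R × Fin (numDup Sg k K) × Sg,
      yPrime Eproj k K ystar {(SpV.xLab p.1 p.2.2, SpV.xDup p.1 p.2.1)}
        = ystar {(Sum.inr p.1, p.2.2)} := by
    intro p
    rw [yPrime_singleton, if_neg (fun h => by simpa using (tags_EOuter h).1)]
    rfl
  rw [Finset.sum_congr rfl fun p _ => hval p]
  rw [Fintype.sum_prod_type]
  simp only [Fintype.sum_prod_type]
  simp [hsum, Finset.card_univ, mul_comm]

lemma sum_EOuter' (ystar : Finset ((L ⊕ R) × Sg) → ℝ) :
    ∑ e ∈ EOuter Sg Eproj k K, yPrime Eproj k K ystar {e} = 0 := by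
  refine Finset.sum_eq_zero fun e he => ?_
  rw [yPrime_singleton, if_pos he]
lemma Phi_eq_empty_of_tags {e : Vt L R Sg k K × Vt L R Sg k K}
    (h1 : tag e.1 ≠ 1) (h2 : ¬ (tag e.1 = 2 ∧ tag e.2 = 3)) : Phi e = ∅ := by
  obtain ⟨e1, e2⟩ := e
  rcases e1 with a | a | a | a | a <;> rcases e2 with b | b | b | b | b <;>
    simp_all [tag] <;> rfl

lemma yPrime_one_of_tags (ystar : Finset ((L ⊕ R) × Sg) → ℝ) (hone : ystar ∅ = 1)
    {e : Vt L R Sg k K × Vt L R Sg k K}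
    (h1 : tag e.1 ≠ 1) (h2 : ¬ (tag e.1 = 2 ∧ tag e.2 = 3)) :
    yPrime Eproj k K ystar {e} = 1 := by
  rw [yPrime_singleton, if_neg (fun h => h1 (tags_EOuter h).1),
    Phi_eq_empty_of_tags h1 h2, hone]

lemma filter_ne_card (σ0 : Sg) {X : Type} [Fintype X] [DecidableEq X] :
    (Finset.univ.filter fun p : X × Sg => p.2 ≠ σ0).card
      = Fintype.card X * (Fintype.card Sg - 1) := by
  have : (Finset.univ.filter fun p : X × Sg => p.2 ≠ σ0)
      = Finset.univ ×ˢ ({σ0}ᶜ : Finset Sg) := by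
    ext p; simp [Finset.mem_product]
  rw [this, Finset.card_product, Finset.card_compl]
  simp [Finset.card_univ]

lemma card_ELStars : (ELStars L R σ0 k K).card
    = Fintype.card L * (Fintype.card Sg - 1) * 2 := by
  rw [ELStars, Finset.card_union_of_disjoint, Finset.card_image_of_injOn,
    Finset.card_image_of_injOn, filter_ne_card σ0]
  · ring
  · intro p hp q hq h
    obtain ⟨p1, p2⟩ := p; obtain ⟨q1, q2⟩ := q
    simp_all [SpV.cLab]
  · intro p hp q hq h
    obtain ⟨p1, p2⟩ := p; obtain ⟨q1, q2⟩ := q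
    simp_all [SpV.cLab]
  · rw [Finset.disjoint_left]
    rintro e he1 he2
    simp only [Finset.mem_image, Finset.mem_filter] at he1 he2
    obtain ⟨p, ⟨-, hp⟩, rfl⟩ := he1
    obtain ⟨q, ⟨-, hq⟩, heq⟩ := he2
    simp_all [SpV.cLab, Prod.ext_iff]

lemma card_ERStars : (ERStars L R σ0 k K).card
    = Fintype.card R * (Fintype.card Sg - 1) * 2 := by
  rw [ERStars, Finset.card_union_of_disjoint, Finset.card_image_of_injOn,
    Finset.card_image_of_injOn, filter_ne_card σ0]
  · ring
  · intro p hp q hq h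
    obtain ⟨p1, p2⟩ := p; obtain ⟨q1, q2⟩ := q
    simp_all [SpV.xLab]
  · intro p hp q hq h
    obtain ⟨p1, p2⟩ := p; obtain ⟨q1, q2⟩ := q
    simp_all [SpV.xLab]
  · rw [Finset.disjoint_left]
    rintro e he1 he2
    simp only [Finset.mem_image, Finset.mem_filter] at he1 he2
    obtain ⟨p, ⟨-, hp⟩, rfl⟩ := he1
    obtain ⟨q, ⟨-, hq⟩, heq⟩ := he2
    simp_all [SpV.xLab, Prod.ext_iff]

lemma sum_ELStars' (ystar : Finset ((L ⊕ R) × Sg) → ℝ) (hone : ystar ∅ = 1) :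
    ∑ e ∈ ELStars L R σ0 k K, yPrime Eproj k K ystar {e}
      = (Fintype.card L * (Fintype.card Sg - 1) * 2 : ℕ) := by
  rw [Finset.sum_congr rfl (fun e he => yPrime_one_of_tags ystar hone
      (by rw [(tags_ELStars he).1]; omega)
      (fun hc => by rw [(tags_ELStars he).1] at hc; omega)),
    Finset.sum_const, card_ELStars]
  simp

lemma sum_ERStars' (ystar : Finset ((L ⊕ R) × Sg) → ℝ) (hone : ystar ∅ = 1) :
    ∑ e ∈ ERStars L R σ0 k K, yPrime Eproj k K ystar {e}
      = (Fintype.card R * (Fintype.card Sg - 1) * 2 : ℕ) := by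
  rw [Finset.sum_congr rfl (fun e he => yPrime_one_of_tags ystar hone
      (by rw [(tags_ERStars he).1]; omega)
      (fun hc => by rw [(tags_ERStars he).2] at hc; omega)),
    Finset.sum_const, card_ERStars]
  simp
lemma length_EMpath (hk : 2 ≤ k) (i : L) (j : R) (σL σR : Sg) :
    (EMpath k K i j σL σR : List (Vt L R Sg k K × Vt L R Sg k K)).length = 2 * k - 3 := by
  rw [EMpath, length_pathEdges]
  simp [midVerts]
  omega

lemma nodup_EMpath (i : L) (j : R) (σL σR : Sg) :
    (EMpath k K i j σL σR : List (Vt L R Sg k K × Vt L R Sg k K)).Nodup := by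
  apply nodup_pathEdges
  have htail : (midVerts k K i j σL σR : List (Vt L R Sg k K)).tail
      = ((List.finRange (2 * k - 4)).map fun t => SpV.mid i j σL σR t)
        ++ [SpV.xLab j σR] := rfl
  rw [htail]
  refine List.Nodup.append ?_ (List.nodup_singleton _) ?_
  · exact (List.nodup_finRange _).map (fun t t' h => by simpa [SpV.mid] using h)
  · intro a ha hb
    simp only [List.mem_singleton] at hb
    subst hb
    simp [SpV.mid, SpV.xLab] at ha

lemma EMpath_fst_sigma {i : L} {j : R} {σL σR : Sg} {u v : Vt L R Sg k K}
    (h : (u, v) ∈ EMpath k K i j σL σR)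
    {i' : L} {j' : R} {σL' σR' : Sg}
    (h' : (u, v) ∈ EMpath k K i' j' σL' σR') : i = i' ∧ j = j' ∧ σL = σL' := by
  obtain ⟨hu, hv⟩ := mem_EMpath_structure h
  obtain ⟨hu', hv'⟩ := mem_EMpath_structure h'
  refine ⟨?_, ?_, ?_⟩
  · rcases hu with hc | ⟨t, hm⟩ <;> rcases hu' with hc' | ⟨t', hm'⟩ <;>
      simp_all [SpV.cLab, SpV.mid]
  · rcases hv with ⟨t, hm⟩ | hx <;> rcases hv' with ⟨t', hm'⟩ | hx' <;>
      simp_all [SpV.xLab, SpV.mid]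
  · rcases hu with hc | ⟨t, hm⟩ <;> rcases hu' with hc' | ⟨t', hm'⟩ <;>
      simp_all [SpV.cLab, SpV.mid]

lemma card_EMedges (hk : 2 ≤ k) :
    (EMedges Eproj π k K).card = Eproj.card * (Fintype.card Sg * (2 * k - 3)) := by
  rw [EMedges, Finset.card_biUnion]
  · have hinner : ∀ p ∈ Eproj, ((Finset.univ : Finset Sg).biUnion fun σL =>
        (EMpath k K p.1 p.2 σL (π p.1 p.2 σL)).toFinset).card
          = Fintype.card Sg * (2 * k - 3) := by
      intro p _
      rw [Finset.card_biUnion]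
      · rw [Finset.sum_congr rfl fun σL _ => ?_, Finset.sum_const, Finset.card_univ,
          smul_eq_mul]
        rw [List.toFinset_card_of_nodup (nodup_EMpath _ _ _ _), length_EMpath hk]
      · intro σL _ σL' _ hne
        simp only [Function.onFun]
        rw [Finset.disjoint_left]
        rintro ⟨u, v⟩ h1 h2
        rw [List.mem_toFinset] at h1 h2
        exact hne (EMpath_fst_sigma h1 h2).2.2
    rw [Finset.sum_congr rfl hinner, Finset.sum_const, smul_eq_mul]
  · intro p hp q hq hne
    simp only [Function.onFun]
    rw [Finset.disjoint_left]
    rintro ⟨u, v⟩ h1 h2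
    simp only [Finset.mem_biUnion, List.mem_toFinset, Finset.mem_univ] at h1 h2
    obtain ⟨σL, -, hm1⟩ := h1
    obtain ⟨σL', -, hm2⟩ := h2
    obtain ⟨hi, hj, -⟩ := EMpath_fst_sigma hm1 hm2
    exact hne (Prod.ext hi hj)

lemma sum_EMedges' (hk : 2 ≤ k) (ystar : Finset ((L ⊕ R) × Sg) → ℝ) (hone : ystar ∅ = 1) :
    ∑ e ∈ EMedges Eproj π k K, yPrime Eproj k K ystar {e}
      = (Eproj.card * (Fintype.card Sg * (2 * k - 3)) : ℕ) := by
  rw [Finset.sum_congr rfl (fun e he => yPrime_one_of_tags ystar hone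
      (by rcases (tags_EMedges he).1 with h | h <;> omega)
      (fun hc => by rcases (tags_EMedges he).1 with h | h <;> omega)),
    Finset.sum_const, card_EMedges hk]
  simp

lemma card_Eproj (hK : ∀ i : L, (Eproj.filter fun e => e.1 = i).card = K) :
    Eproj.card = Fintype.card L * K := by
  rw [Finset.card_eq_sum_card_fiberwise (f := Prod.fst) (t := Finset.univ) (by simp)]
  simp [hK, Finset.card_univ, mul_comm]
set_option maxHeartbeats 2000000 in
lemma card_Verts :
    (Verts Eproj π k K).card
      = Fintype.card L * Fintype.card Sg + Fintype.card L * numDup Sg k K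
        + Fintype.card R * Fintype.card Sg + Fintype.card R * numDup Sg k K
        + Eproj.card * (Fintype.card Sg * (2 * k - 4)) := by
  classical
  set A := (Finset.univ.image fun p : L × Sg => (SpV.cLab p.1 p.2 : Vt L R Sg k K)) with hA
  set B := (Finset.univ.image fun p : L × Fin (numDup Sg k K) =>
      (SpV.cDup p.1 p.2 : Vt L R Sg k K)) with hB
  set C := (Finset.univ.image fun p : R × Sg => (SpV.xLab p.1 p.2 : Vt L R Sg k K)) with hC
  set D' := (Finset.univ.image fun p : R × Fin (numDup Sg k K) =>
      (SpV.xDup p.1 p.2 : Vt L R Sg k K)) with hD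
  set Em := (Eproj.biUnion fun e => (Finset.univ : Finset Sg).biUnion fun σL =>
      Finset.univ.image fun t : Fin (2 * k - 4) =>
        (SpV.mid e.1 e.2 σL (π e.1 e.2 σL) t : Vt L R Sg k K)) with hEm
  have tA : ∀ v ∈ A, tag v = 0 := by
    intro v hv; obtain ⟨p, -, rfl⟩ := Finset.mem_image.1 hv; simp
  have tB : ∀ v ∈ B, tag v = 1 := by
    intro v hv; obtain ⟨p, -, rfl⟩ := Finset.mem_image.1 hv; simp
  have tC : ∀ v ∈ C, tag v = 2 := by
    intro v hv; obtain ⟨p, -, rfl⟩ := Finset.mem_image.1 hv; simp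
  have tD : ∀ v ∈ D', tag v = 3 := by
    intro v hv; obtain ⟨p, -, rfl⟩ := Finset.mem_image.1 hv; simp
  have tE : ∀ v ∈ Em, tag v = 4 := by
    intro v hv
    simp only [hEm, Finset.mem_biUnion, Finset.mem_image] at hv
    obtain ⟨e, -, σL, -, t, -, rfl⟩ := hv; simp
  have hd1 : Disjoint A B := Finset.disjoint_left.2 fun v h1 h2 => by
    have := tA v h1; have := tB v h2; omega
  have hd2 : Disjoint (A ∪ B) C := Finset.disjoint_left.2 fun v h1 h2 => by
    have := tC v h2
    rcases Finset.mem_union.1 h1 with h | h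
    · have := tA v h; omega
    · have := tB v h; omega
  have hd3 : Disjoint (A ∪ B ∪ C) D' := Finset.disjoint_left.2 fun v h1 h2 => by
    have := tD v h2
    rcases Finset.mem_union.1 h1 with h | h
    · rcases Finset.mem_union.1 h with h | h
      · have := tA v h; omega
      · have := tB v h; omega
    · have := tC v h; omega
  have hd4 : Disjoint (A ∪ B ∪ C ∪ D') Em := Finset.disjoint_left.2 fun v h1 h2 => by
    have := tE v h2
    rcases Finset.mem_union.1 h1 with h | h
    · rcases Finset.mem_union.1 h with h | h
      · rcases Finset.mem_union.1 h with h | h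
        · have := tA v h; omega
        · have := tB v h; omega
      · have := tC v h; omega
    · have := tD v h; omega
  have hcA : A.card = Fintype.card L * Fintype.card Sg := by
    rw [hA, Finset.card_image_of_injOn (by
      intro p _ q _ h
      obtain ⟨p1, p2⟩ := p; obtain ⟨q1, q2⟩ := q
      simp_all [SpV.cLab])]
    simp [Finset.card_univ]
  have hcB : B.card = Fintype.card L * numDup Sg k K := by
    rw [hB, Finset.card_image_of_injOn (by
      intro p _ q _ h
      obtain ⟨p1, p2⟩ := p; obtain ⟨q1, q2⟩ := q
      simp_all [SpV.cDup])]
    simp [Finset.card_univ]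
  have hcC : C.card = Fintype.card R * Fintype.card Sg := by
    rw [hC, Finset.card_image_of_injOn (by
      intro p _ q _ h
      obtain ⟨p1, p2⟩ := p; obtain ⟨q1, q2⟩ := q
      simp_all [SpV.xLab])]
    simp [Finset.card_univ]
  have hcD : D'.card = Fintype.card R * numDup Sg k K := by
    rw [hD, Finset.card_image_of_injOn (by
      intro p _ q _ h
      obtain ⟨p1, p2⟩ := p; obtain ⟨q1, q2⟩ := q
      simp_all [SpV.xDup])]
    simp [Finset.card_univ]
  have hcE : Em.card = Eproj.card * (Fintype.card Sg * (2 * k - 4)) := by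
    rw [hEm, Finset.card_biUnion]
    · have hinner : ∀ p ∈ Eproj, ((Finset.univ : Finset Sg).biUnion fun σL =>
          Finset.univ.image fun t : Fin (2 * k - 4) =>
            (SpV.mid p.1 p.2 σL (π p.1 p.2 σL) t : Vt L R Sg k K)).card
            = Fintype.card Sg * (2 * k - 4) := by
        intro p _
        rw [Finset.card_biUnion]
        · rw [Finset.sum_congr rfl fun σL _ => ?_, Finset.sum_const, Finset.card_univ,
            smul_eq_mul]
          rw [Finset.card_image_of_injOn (fun t _ t' _ h => by simpa [SpV.mid] using h)]
          simp [Finset.card_univ]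
        · intro σL _ σL' _ hne
          simp only [Function.onFun]
          rw [Finset.disjoint_left]
          intro v h1 h2
          obtain ⟨t, -, rfl⟩ := Finset.mem_image.1 h1
          obtain ⟨t', -, heq⟩ := Finset.mem_image.1 h2
          have hx : p.1 = p.1 ∧ p.2 = p.2 ∧ σL' = σL ∧
              π p.1 p.2 σL' = π p.1 p.2 σL ∧ t' = t := by simpa [SpV.mid] using heq
          exact hne hx.2.2.1.symm
      rw [Finset.sum_congr rfl hinner, Finset.sum_const, smul_eq_mul]
    · intro p hp q hq hne
      simp only [Function.onFun]
      rw [Finset.disjoint_left]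
      intro v h1 h2
      simp only [Finset.mem_biUnion, Finset.mem_image, Finset.mem_univ] at h1 h2
      obtain ⟨σL, -, t, -, rfl⟩ := h1
      obtain ⟨σL', -, t', -, heq⟩ := h2
      have hx : q.1 = p.1 ∧ q.2 = p.2 ∧ σL' = σL ∧
          π q.1 q.2 σL' = π p.1 p.2 σL ∧ t' = t := by simpa [SpV.mid] using heq
      exact hne (Prod.ext hx.1.symm hx.2.1.symm)
  rw [show Verts Eproj π k K = A ∪ B ∪ C ∪ D' ∪ Em from rfl,
    Finset.card_union_of_disjoint hd4, Finset.card_union_of_disjoint hd3,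
    Finset.card_union_of_disjoint hd2, Finset.card_union_of_disjoint hd1,
    hcA, hcB, hcC, hcD, hcE]
end Spanner

/-- Lemma `directObj`.  For the directed spanner instance `G = (V,E)` built
(with parameters `k ≥ 2`, `K ≥ 1`) from a projection games instance in which every left vertex
has degree exactly `K`, and the fractional solution `y'` built from a feasible solution `y*`
of `SDP_Proj^{r+2}`, the objective value `∑_{e ∈ E} y'_{{e}}` equals
`(m+n)(2|Σ|−2) + m·K·|Σ|·(2k−3) + (m+n)·k·K·|Σ|`, and this quantity is at most `5·|V|`. -/
theorem directed_spanner_fractional_objective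
    {L R Sg : Type} [Fintype L] [Fintype R] [Fintype Sg]
    [DecidableEq L] [DecidableEq R] [DecidableEq Sg]
    (Eproj : Finset (L × R)) (π : L → R → Sg → Sg) (σ0 : Sg) (k K : ℕ)
    (hk : 2 ≤ k) (hK : 1 ≤ K)
    (hdeg : ∀ i : L, (Eproj.filter fun e => e.1 = i).card = K)
    (r : ℕ) (ystar : Finset ((L ⊕ R) × Sg) → ℝ)
    (hfeas : ProjFeasible (r + 2) ystar) :
    (∑ e ∈ Spanner.Edges Eproj π σ0 k K, Spanner.yPrime Eproj k K ystar {e}) =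
        ((Fintype.card L : ℝ) + Fintype.card R) * (2 * Fintype.card Sg - 2) +
        (Fintype.card L : ℝ) * K * Fintype.card Sg * (2 * k - 3) +
        ((Fintype.card L : ℝ) + Fintype.card R) * k * K * Fintype.card Sg ∧
    (∑ e ∈ Spanner.Edges Eproj π σ0 k K, Spanner.yPrime Eproj k K ystar {e}) ≤
        5 * ((Spanner.Verts Eproj π k K).card : ℝ) := by
  classical
  obtain ⟨hone, -, hcond⟩ := hfeas
  have hsum : ∀ v : L ⊕ R, ∑ σ : Sg, ystar {(v, σ)} = 1 := by
    intro v
    have h := hcond v ∅ ∅ (by simp) (by simp)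
    simpa [hone] using h
  have : Nonempty Sg := ⟨σ0⟩
  have hSg : 1 ≤ Fintype.card Sg := Fintype.card_pos
  have hd1 : Disjoint (Spanner.ELedges L R Sg k K) (Spanner.ELStars L R σ0 k K) :=
    Finset.disjoint_left.2 fun e h1 h2 => by
      have := (Spanner.tags_ELedges h1).1; have := (Spanner.tags_ELStars h2).1; omega
  have hd2 : Disjoint (Spanner.ELedges L R Sg k K ∪ Spanner.ELStars L R σ0 k K)
      (Spanner.EMedges Eproj π k K) :=
    Finset.disjoint_left.2 fun e h1 h2 => by
      have h2' := (Spanner.tags_EMedges h2).2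
      rcases Finset.mem_union.1 h1 with h | h
      · have := (Spanner.tags_ELedges h).2; omega
      · have := (Spanner.tags_ELStars h).2; omega
  have hd3 : Disjoint (Spanner.ELedges L R Sg k K ∪ Spanner.ELStars L R σ0 k K ∪
      Spanner.EMedges Eproj π k K) (Spanner.ERStars L R σ0 k K) :=
    Finset.disjoint_left.2 fun e h1 h2 => by
      have h2' := (Spanner.tags_ERStars h2).1
      rcases Finset.mem_union.1 h1 with h | h
      · rcases Finset.mem_union.1 h with h | h
        · have := (Spanner.tags_ELedges h).1; omega
        · have := (Spanner.tags_ELStars h).1; omega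
      · have := (Spanner.tags_EMedges h).1; omega
  have hd4 : Disjoint (Spanner.ELedges L R Sg k K ∪ Spanner.ELStars L R σ0 k K ∪
      Spanner.EMedges Eproj π k K ∪ Spanner.ERStars L R σ0 k K)
      (Spanner.ERedges L R Sg k K) :=
    Finset.disjoint_left.2 fun e h1 h2 => by
      have h2' := (Spanner.tags_ERedges h2).2
      rcases Finset.mem_union.1 h1 with h | h
      · rcases Finset.mem_union.1 h with h | h
        · rcases Finset.mem_union.1 h with h | h
          · have := (Spanner.tags_ELedges h).2; omega
          · have := (Spanner.tags_ELStars h).2; omega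
        · have := (Spanner.tags_EMedges h).2; omega
      · have := (Spanner.tags_ERStars h).2; omega
  have hd5 : Disjoint (Spanner.ELedges L R Sg k K ∪ Spanner.ELStars L R σ0 k K ∪
      Spanner.EMedges Eproj π k K ∪ Spanner.ERStars L R σ0 k K ∪
      Spanner.ERedges L R Sg k K) (Spanner.EOuter Sg Eproj k K) :=
    Finset.disjoint_left.2 fun e h1 h2 => by
      have h2' := (Spanner.tags_EOuter h2)
      rcases Finset.mem_union.1 h1 with h | h
      · rcases Finset.mem_union.1 h with h | h
        · rcases Finset.mem_union.1 h with h | h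
          · rcases Finset.mem_union.1 h with h | h
            · have := (Spanner.tags_ELedges h).2; omega
            · have := (Spanner.tags_ELStars h).1; omega
          · have := (Spanner.tags_EMedges h).1; omega
        · have := (Spanner.tags_ERStars h).1; omega
      · have := (Spanner.tags_ERedges h).1; omega
  have htotal : ∑ e ∈ Spanner.Edges Eproj π σ0 k K, Spanner.yPrime Eproj k K ystar {e}
      = ((Fintype.card L * Spanner.numDup Sg k K
          + Fintype.card L * (Fintype.card Sg - 1) * 2
          + Fintype.card L * K * (Fintype.card Sg * (2 * k - 3))
          + Fintype.card R * (Fintype.card Sg - 1) * 2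
          + Fintype.card R * Spanner.numDup Sg k K : ℕ) : ℝ) := by
    rw [Spanner.Edges, Finset.sum_union hd5, Finset.sum_union hd4, Finset.sum_union hd3,
      Finset.sum_union hd2, Finset.sum_union hd1,
      Spanner.sum_ELedges' ystar hsum, Spanner.sum_ELStars' ystar hone,
      Spanner.sum_EMedges' hk ystar hone, Spanner.sum_ERStars' ystar hone,
      Spanner.sum_ERedges' ystar hsum, Spanner.sum_EOuter' ystar,
      Spanner.card_Eproj hdeg]
    push_cast
    ring
  have h3k : (3 : ℕ) ≤ 2 * k := by omega
  have h4k : (4 : ℕ) ≤ 2 * k := by omega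
  constructor
  · rw [htotal]
    unfold Spanner.numDup
    push_cast [Nat.cast_sub hSg, Nat.cast_sub h3k]
    ring
  · rw [htotal, Spanner.card_Verts, Spanner.card_Eproj hdeg]
    unfold Spanner.numDup
    push_cast [Nat.cast_sub hSg, Nat.cast_sub h3k, Nat.cast_sub h4k]
    have hM : (0 : ℝ) ≤ Fintype.card L := by positivity
    have hN : (0 : ℝ) ≤ Fintype.card R := by positivity
    have hS : (1 : ℝ) ≤ Fintype.card Sg := by exact_mod_cast hSg
    have hKr : (1 : ℝ) ≤ K := by exact_mod_cast hK
    have hkr : (2 : ℝ) ≤ k := by exact_mod_cast hk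
    nlinarith [mul_nonneg hM (by linarith : (0:ℝ) ≤ (Fintype.card Sg : ℝ)),
      mul_nonneg hN (by linarith : (0:ℝ) ≤ (Fintype.card Sg : ℝ)),
      mul_nonneg (mul_nonneg (mul_nonneg hM (by linarith : (0:ℝ) ≤ (K:ℝ)))
        (by linarith : (0:ℝ) ≤ (Fintype.card Sg : ℝ))) (by linarith : (0:ℝ) ≤ (k:ℝ)),
      mul_nonneg (mul_nonneg (mul_nonneg hN (by linarith : (0:ℝ) ≤ (K:ℝ)))
        (by linarith : (0:ℝ) ≤ (Fintype.card Sg : ℝ))) (by linarith : (0:ℝ) ≤ (k:ℝ)),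
      mul_nonneg (mul_nonneg hM (by linarith : (0:ℝ) ≤ (K:ℝ)))
        (by linarith : (0:ℝ) ≤ (Fintype.card Sg : ℝ))]
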